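/- For every h ≥ 1 and n ≥ 1, there is a natural bijection between labeled pruned h-trees with n tips and flags of pre-orders (π_1 ≺ π_2 ≺ ... ≺ π_h) on {1,...,n} with π_h a total order; under this bijection a tree T of dimension i corresponds to a flag with Σ_{s=1}^h |π_s| - h - 1 = i, where |π| is the number of equivalence classes of the pre-order π. -/

import Mathlib

noncomputable section

/-- A labeled pruned `h`-tree with `n` tips: a chain of order-preserving surjections
`[k_h] → [k_{h-1}] → ⋯ → [k_0] = [1]` (surjectivity of each level map is exactly the
condition that every leaf is a tip, i.e. the tree is pruned), together with a labeling
of the tips by `{1,…,n}`. -/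
structure LabeledPrunedTree (h n : ℕ) where
  /-- the number of vertices at each level -/
  k : Fin (h + 1) → ℕ
  k_zero : k 0 = 1
  k_pos : ∀ m, 1 ≤ k m
  /-- the level maps (sending a vertex to the vertex below it) -/
  ρ : ∀ m : Fin h, Fin (k m.succ) → Fin (k m.castSucc)
  mono : ∀ m, Monotone (ρ m)
  pruned : ∀ m, Function.Surjective (ρ m)
  /-- labeling of the tips -/
  label : Fin (k (Fin.last h)) ≃ Fin n

/-- The number of edges of a pruned `h`-tree, `e(T) = Σ_{m=1}^{h} k_m`. -/
def LabeledPrunedTree.edges {h n : ℕ} (T : LabeledPrunedTree h n) : ℕ :=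
  ∑ m : Fin h, T.k m.succ

/-- A flag of pre-orders `(π_1 ≺ π_2 ≺ ⋯ ≺ π_h)` on `{1,…,n}`: each `π_s` is a reflexive
transitive total relation, later ones refine earlier ones (`π_s ≺ π_t` for `s ≤ t` means
`π_t` refines `π_s`), and the last one `π_h` is a total order. -/
structure FlagOfPreorders (h n : ℕ) where
  /-- the pre-orders; index `s : Fin h` corresponds to `π_{s+1}` -/
  le : Fin h → Fin n → Fin n → Prop
  refl : ∀ s i, le s i i
  trans : ∀ s i j l, le s i j → le s j l → le s i l
  total : ∀ s i j, le s i j ∨ le s j i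
  refines : ∀ s t : Fin h, s ≤ t → ∀ i j, le t i j → le s i j
  /-- the top pre-order `π_h` is a total order (antisymmetric) -/
  top_antisymm : ∀ s : Fin h, (∀ t, t ≤ s) → ∀ i j, le s i j → le s j i → i = j

/-- The number `|π_s|` of equivalence classes of the `s`-th pre-order of a flag. -/
def FlagOfPreorders.numClasses {h n : ℕ} (F : FlagOfPreorders h n) (s : Fin h) : ℕ :=
  Nat.card (Quot fun i j : Fin n => F.le s i j ∧ F.le s j i)

namespace Aux

variable {h n : ℕ}

/-- Descent maps of a tree, from level `b` down to level `a`. -/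
def down (T : LabeledPrunedTree h n) :
    ∀ (b : ℕ) (hb : b ≤ h) (a : ℕ) (hab : a ≤ b),
      Fin (T.k ⟨b, Nat.lt_succ_of_le hb⟩) → Fin (T.k ⟨a, Nat.lt_succ_of_le (hab.trans hb)⟩)
  | 0, _, 0, _ => id
  | 0, _, _ + 1, hab => fun _ => absurd hab (by omega)
  | b + 1, hb, a, hab =>
      if ha : a = b + 1 then fun x => ⟨x.val, by subst ha; exact x.isLt⟩
      else down T b (Nat.le_of_succ_le hb) a (by omega) ∘ T.ρ ⟨b, hb⟩

theorem down_val_self (T : LabeledPrunedTree h n) :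
    ∀ (b : ℕ) (hb : b ≤ h) (a : ℕ) (hab : a ≤ b) (hab' : a = b) (x),
      (down T b hb a hab x).val = x.val := by
  intro b hb a hab hab' x
  subst hab'
  cases a with
  | zero => rfl
  | succ t => simp [down]

theorem down_peel (T : LabeledPrunedTree h n) (b : ℕ) (hb : b + 1 ≤ h) (a : ℕ)
    (hab : a ≤ b + 1) (ha : a ≤ b) (x) :
    down T (b+1) hb a hab x = down T b (Nat.le_of_succ_le hb) a ha (T.ρ ⟨b, hb⟩ x) := by
  simp only [down, dif_neg (by omega : ¬ a = b + 1)]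
  rfl

theorem down_mono (T : LabeledPrunedTree h n) :
    ∀ (b : ℕ) (hb : b ≤ h) (a : ℕ) (hab : a ≤ b), Monotone (down T b hb a hab) := by
  intro b
  induction b with
  | zero =>
    intro hb a hab
    obtain rfl : a = 0 := by omega
    exact fun x y hxy => hxy
  | succ b ih =>
    intro hb a hab x y hxy
    by_cases ha : a = b + 1
    · subst ha
      simp only [Fin.le_def, down_val_self T _ _ _ _ rfl]
      exact hxy
    · rw [down_peel T b hb a hab (by omega), down_peel T b hb a hab (by omega)]
      exact ih _ _ (by omega) (T.mono _ hxy)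

theorem down_surj (T : LabeledPrunedTree h n) :
    ∀ (b : ℕ) (hb : b ≤ h) (a : ℕ) (hab : a ≤ b), Function.Surjective (down T b hb a hab) := by
  intro b
  induction b with
  | zero =>
    intro hb a hab
    obtain rfl : a = 0 := by omega
    exact fun y => ⟨y, rfl⟩
  | succ b ih =>
    intro hb a hab y
    by_cases ha : a = b + 1
    · subst ha
      exact ⟨⟨y.val, y.isLt⟩, Fin.ext (down_val_self T _ _ _ _ rfl _)⟩
    · obtain ⟨z, hz⟩ := ih (Nat.le_of_succ_le hb) a (by omega) y
      obtain ⟨x, hx⟩ := T.pruned ⟨b, hb⟩ z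
      exact ⟨x, by rw [down_peel T b hb a hab (by omega), hx]; exact hz⟩

theorem down_comp (T : LabeledPrunedTree h n) :
    ∀ (c : ℕ) (hc : c ≤ h) (b : ℕ) (hbc : b ≤ c) (a : ℕ) (hab : a ≤ b) (x),
      down T c hc a (hab.trans hbc) x
        = down T b (hbc.trans hc) a hab (down T c hc b hbc x) := by
  intro c hc b hbc a hab
  induction c, hbc using Nat.le_induction with
  | base =>
    intro x
    congr 1
    exact (Fin.ext (down_val_self T _ _ _ _ rfl x)).symm
  | succ c hbc ih =>
    intro x
    rw [down_peel T c hc a (by omega) (by omega), down_peel T c hc b (by omega) hbc]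
    exact ih (Nat.le_of_succ_le hc) _


variable {h n : ℕ}

/-- The map sending a tip label to the vertex at level `s+1` above which it sits. -/
def treeF (T : LabeledPrunedTree h n) (s : Fin h) (i : Fin n) : Fin (T.k s.succ) :=
  down T h le_rfl (s.val + 1) s.isLt (T.label.symm i)

theorem treeF_surj (T : LabeledPrunedTree h n) (s : Fin h) : Function.Surjective (treeF T s) :=
  (down_surj T h le_rfl (s.val + 1) s.isLt).comp T.label.symm.surjective

theorem treeF_step (T : LabeledPrunedTree h n) (s t : Fin h) (hst : s ≤ t) (i : Fin n) :
    treeF T s i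
      = down T (t.val + 1) t.isLt (s.val + 1) (by omega) (treeF T t i) :=
  down_comp T h le_rfl (t.val + 1) t.isLt (s.val + 1) (by omega) (T.label.symm i)

theorem treeF_top_val (T : LabeledPrunedTree h n) (s : Fin h) (hs : s.val + 1 = h) (i : Fin n) :
    (treeF T s i).val = (T.label.symm i).val :=
  down_val_self T h le_rfl (s.val + 1) s.isLt hs _

/-- The flag of pre-orders associated with a labeled pruned tree. -/
def toFlag (T : LabeledPrunedTree h n) : FlagOfPreorders h n where
  le s i j := treeF T s i ≤ treeF T s j
  refl s i := le_refl _
  trans s i j l := le_trans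
  total s i j := le_total _ _
  refines s t hst i j hij := by
    show treeF T s i ≤ treeF T s j
    rw [treeF_step T s t hst i, treeF_step T s t hst j]
    exact down_mono T _ _ _ _ hij
  top_antisymm s hs i j hij hji := by
    have hsh : s.val + 1 = h := by
      have h1 : h - 1 ≤ s.val := hs ⟨h - 1, by have := s.isLt; omega⟩
      have h2 := s.isLt
      omega
    have h1 : (T.label.symm i).val = (T.label.symm j).val := by
      rw [← treeF_top_val T s hsh i, ← treeF_top_val T s hsh j]
      exact congrArg Fin.val (le_antisymm (hij : treeF T s i ≤ treeF T s j) hji)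
    have : T.label.symm i = T.label.symm j := Fin.ext h1
    simpa using congrArg T.label this

theorem numClasses_toFlag (T : LabeledPrunedTree h n) (s : Fin h) :
    (toFlag T).numClasses s = T.k s.succ := by
  have hbij : Function.Bijective
      (Quot.lift (treeF T s) (fun a b hab => le_antisymm hab.1 hab.2) :
        Quot (fun i j : Fin n => (toFlag T).le s i j ∧ (toFlag T).le s j i) → Fin (T.k s.succ)) := by
    constructor
    · intro q1 q2
      induction q1 using Quot.ind with | _ a =>
      induction q2 using Quot.ind with | _ b =>
      intro hab
      exact Quot.sound ⟨le_of_eq hab, le_of_eq (hab.symm : treeF T s b = treeF T s a)⟩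
    · intro y
      obtain ⟨i, hi⟩ := treeF_surj T s y
      exact ⟨Quot.mk _ i, hi⟩
  unfold FlagOfPreorders.numClasses
  rw [Nat.card_eq_of_bijective _ hbij, Nat.card_eq_fintype_card, Fintype.card_fin]

/-- The `s`-th equivalence relation of a flag. -/
def rel (F : FlagOfPreorders h n) (s : Fin h) (i j : Fin n) : Prop :=
  F.le s i j ∧ F.le s j i

/-- The quotient of `Fin n` by the `s`-th equivalence relation of a flag. -/
def QS (F : FlagOfPreorders h n) (s : Fin h) : Type :=
  Quot (rel F s)

instance (F : FlagOfPreorders h n) (s : Fin h) : LinearOrder (QS F s) where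
  le := Quot.lift₂ (F.le s)
    (fun a b₁ b₂ hb => propext ⟨fun hx => F.trans s a b₁ b₂ hx hb.1,
      fun hx => F.trans s a b₂ b₁ hx hb.2⟩)
    (fun a₁ a₂ b ha => propext ⟨fun hx => F.trans s a₂ a₁ b ha.2 hx,
      fun hx => F.trans s a₁ a₂ b ha.1 hx⟩)
  le_refl := by
    intro q; induction q using Quot.ind with | _ a => exact F.refl s a
  le_trans := by
    intro q1 q2 q3
    induction q1 using Quot.ind with | _ a =>
    induction q2 using Quot.ind with | _ b =>
    induction q3 using Quot.ind with | _ c =>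
    exact F.trans s a b c
  le_antisymm := by
    intro q1 q2
    induction q1 using Quot.ind with | _ a =>
    induction q2 using Quot.ind with | _ b =>
    intro hab hba
    exact Quot.sound ⟨hab, hba⟩
  le_total := by
    intro q1 q2
    induction q1 using Quot.ind with | _ a =>
    induction q2 using Quot.ind with | _ b =>
    exact F.total s a b
  toDecidableLE := Classical.decRel _

noncomputable instance (F : FlagOfPreorders h n) (s : Fin h) : Fintype (QS F s) := by
  classical
  exact Fintype.ofSurjective (Quot.mk _)
    (fun q => by induction q using Quot.ind with | _ i => exact ⟨i, rfl⟩)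


/-- The order isomorphism enumerating the classes of the `s`-th pre-order. -/
def eIso (F : FlagOfPreorders h n) (s : Fin h) :
    Fin (Fintype.card (QS F s)) ≃o QS F s :=
  monoEquivOfFin (QS F s) rfl

/-- The projection between quotients of a flag. -/
def phi (F : FlagOfPreorders h n) {s t : Fin h} (hst : s ≤ t) : QS F t → QS F s :=
  Quot.lift (fun i => Quot.mk _ i)
    (fun a b hab => Quot.sound ⟨F.refines s t hst _ _ hab.1, F.refines s t hst _ _ hab.2⟩)

theorem phi_mk (F : FlagOfPreorders h n) {s t : Fin h} (hst : s ≤ t) (i : Fin n) :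
    phi F hst (Quot.mk _ i) = Quot.mk _ i := rfl

theorem phi_self (F : FlagOfPreorders h n) {s : Fin h} (hss : s ≤ s) (q : QS F s) :
    phi F hss q = q := by
  induction q using Quot.ind with | _ a => rfl

theorem phi_phi (F : FlagOfPreorders h n) {s t u : Fin h} (hst : s ≤ t) (htu : t ≤ u)
    (q : QS F u) : phi F hst (phi F htu q) = phi F (hst.trans htu) q := by
  induction q using Quot.ind with | _ a => rfl

theorem phi_mono (F : FlagOfPreorders h n) {s t : Fin h} (hst : s ≤ t) :
    Monotone (phi F hst) := by
  intro q1 q2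
  induction q1 using Quot.ind with | _ a =>
  induction q2 using Quot.ind with | _ b =>
  exact F.refines s t hst a b

theorem phi_surj (F : FlagOfPreorders h n) {s t : Fin h} (hst : s ≤ t) :
    Function.Surjective (phi F hst) :=
  fun q => by induction q using Quot.ind with | _ i => exact ⟨Quot.mk _ i, rfl⟩

theorem mk_top_bij (F : FlagOfPreorders (h+1) n) :
    Function.Bijective (Quot.mk (rel F (Fin.last h)) : Fin n → QS F (Fin.last h)) := by
  constructor
  · have hg : ∀ i : Fin n, Quot.lift id
        (fun a b hab => F.top_antisymm (Fin.last h) (fun t => Fin.le_last t) a b hab.1 hab.2)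
        (Quot.mk (rel F (Fin.last h)) i) = i := fun i => rfl
    intro i j hij
    rw [← hg i, ← hg j, hij]
  · intro q
    induction q using Quot.ind with | _ i => exact ⟨i, rfl⟩

/-- The labeled pruned tree associated with a flag of pre-orders. -/
def fromFlag (hn : 1 ≤ n) (F : FlagOfPreorders (h+1) n) : LabeledPrunedTree (h+1) n where
  k m :=
    match m with
    | ⟨0, _⟩ => 1
    | ⟨t+1, ht⟩ => Fintype.card (QS F ⟨t, Nat.lt_of_succ_lt_succ ht⟩)
  k_zero := rfl
  k_pos m :=
    match m with
    | ⟨0, _⟩ => le_rfl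
    | ⟨t+1, ht⟩ => Fintype.card_pos_iff.mpr ⟨Quot.mk _ ⟨0, hn⟩⟩
  ρ m :=
    match m with
    | ⟨0, h0⟩ => fun _ => ⟨0, Nat.one_pos⟩
    | ⟨t+1, ht⟩ => fun x =>
        (eIso F ⟨t, Nat.lt_of_succ_lt ht⟩).symm
          (phi F (show (⟨t, Nat.lt_of_succ_lt ht⟩ : Fin (h+1)) ≤ ⟨t+1, ht⟩ from Nat.le_succ t)
            (eIso F ⟨t+1, ht⟩ x))
  mono m :=
    match m with
    | ⟨0, h0⟩ => fun x y _ => le_rfl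
    | ⟨t+1, ht⟩ =>
        ((eIso F ⟨t, Nat.lt_of_succ_lt ht⟩).symm.monotone.comp
          ((phi_mono F (show (⟨t, Nat.lt_of_succ_lt ht⟩ : Fin (h+1)) ≤ ⟨t+1, ht⟩ from
              Nat.le_succ t)).comp (eIso F ⟨t+1, ht⟩).monotone))
  pruned m :=
    match m with
    | ⟨0, h0⟩ => fun y => by
        refine ⟨⟨0, Fintype.card_pos_iff.mpr ⟨Quot.mk _ ⟨0, hn⟩⟩⟩, Fin.ext ?_⟩
        have hy : y.val < 1 := y.isLt
        show (0 : ℕ) = y.val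
        omega
    | ⟨t+1, ht⟩ =>
        ((eIso F ⟨t, Nat.lt_of_succ_lt ht⟩).symm.surjective.comp
          ((phi_surj F (show (⟨t, Nat.lt_of_succ_lt ht⟩ : Fin (h+1)) ≤ ⟨t+1, ht⟩ from
              Nat.le_succ t)).comp (eIso F ⟨t+1, ht⟩).surjective))
  label :=
    (eIso F (Fin.last h)).toEquiv.trans (Equiv.ofBijective _ (mk_top_bij F)).symm

theorem fromFlag_k (hn : 1 ≤ n) (F : FlagOfPreorders (h+1) n) (s : Fin (h+1)) :
    (fromFlag hn F).k s.succ = Fintype.card (QS F s) := rfl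

theorem fromFlag_rho (hn : 1 ≤ n) (F : FlagOfPreorders (h+1) n) (t : ℕ) (ht : t + 1 < h + 1)
    (x : Fin ((fromFlag hn F).k (Fin.succ ⟨t+1, ht⟩))) :
    (fromFlag hn F).ρ ⟨t+1, ht⟩ x
      = (eIso F ⟨t, Nat.lt_of_succ_lt ht⟩).symm
          (phi F (show (⟨t, Nat.lt_of_succ_lt ht⟩ : Fin (h+1)) ≤ ⟨t+1, ht⟩ from Nat.le_succ t)
            (eIso F ⟨t+1, ht⟩ x)) := rfl

theorem down_fromFlag (hn : 1 ≤ n) (F : FlagOfPreorders (h+1) n) :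
    ∀ (b : ℕ) (hb : b < h + 1) (a : ℕ) (hab : a ≤ b)
      (x : Fin (Fintype.card (QS F ⟨b, hb⟩))),
      down (fromFlag hn F) (b+1) hb (a+1) (Nat.succ_le_succ hab) x
        = (eIso F ⟨a, lt_of_le_of_lt hab hb⟩).symm
            (phi F (show (⟨a, lt_of_le_of_lt hab hb⟩ : Fin (h+1)) ≤ ⟨b, hb⟩ from hab)
              (eIso F ⟨b, hb⟩ x)) := by
  intro b
  induction b with
  | zero =>
    intro hb a hab x
    obtain rfl : a = 0 := by omega
    rw [phi_self]
    apply Fin.ext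
    erw [down_val_self _ _ _ _ _ rfl]
    exact (congrArg Fin.val ((eIso F ⟨0, hb⟩).symm_apply_apply x)).symm
  | succ b ih =>
    intro hb a hab x
    by_cases ha : a = b + 1
    · subst ha
      rw [phi_self]
      apply Fin.ext
      erw [down_val_self _ _ _ _ _ rfl]
      exact (congrArg Fin.val ((eIso F ⟨b+1, hb⟩).symm_apply_apply x)).symm
    · have hab' : a ≤ b := by omega
      erw [down_peel (fromFlag hn F) (b+1) hb (a+1) (Nat.succ_le_succ hab) (Nat.succ_le_succ hab')]
      rw [fromFlag_rho hn F b hb x]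
      rw [ih (Nat.lt_of_succ_lt hb) a hab' _]
      rw [OrderIso.apply_symm_apply]
      rw [phi_phi]

theorem flag_ext {F G : FlagOfPreorders h n} (hle : F.le = G.le) : F = G := by
  cases F; cases G
  cases hle
  rfl

theorem label_fromFlag_symm (hn : 1 ≤ n) (F : FlagOfPreorders (h+1) n) (i : Fin n) :
    (fromFlag hn F).label.symm i
      = (eIso F ⟨h, Nat.lt_succ_self h⟩).symm
          (Quot.mk (rel F ⟨h, Nat.lt_succ_self h⟩) i) := rfl

theorem toFlag_fromFlag (hn : 1 ≤ n) (F : FlagOfPreorders (h+1) n) :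
    toFlag (fromFlag hn F) = F := by
  apply flag_ext
  funext s i j
  apply propext
  show treeF (fromFlag hn F) s i ≤ treeF (fromFlag hn F) s j ↔ F.le s i j
  have key : ∀ l : Fin n,
      treeF (fromFlag hn F) s l
        = (eIso F ⟨s.val, s.isLt⟩).symm
            (phi F (show (⟨s.val, s.isLt⟩ : Fin (h+1)) ≤ ⟨h, Nat.lt_succ_self h⟩ from
                Nat.lt_succ_iff.mp s.isLt)
              (Quot.mk (rel F ⟨h, Nat.lt_succ_self h⟩) l)) := by
    intro l
    show down (fromFlag hn F) (h+1) le_rfl (s.val+1) s.isLt ((fromFlag hn F).label.symm l) = _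
    rw [label_fromFlag_symm hn F l]
    rw [down_fromFlag hn F h (Nat.lt_succ_self h) s.val (Nat.lt_succ_iff.mp s.isLt) _]
    erw [OrderIso.apply_symm_apply]
  rw [key i, key j]
  erw [(eIso F ⟨s.val, s.isLt⟩).symm.le_iff_le]
  rw [phi_mk, phi_mk]
  exact Iff.rfl

theorem rank_unique {α : Type*} {k l : ℕ} {f : α → Fin k} {g : α → Fin l}
    (hf : Function.Surjective f) (hg : Function.Surjective g)
    (hfg : ∀ i j, f i ≤ f j ↔ g i ≤ g j) :
    k = l ∧ ∀ i, (f i).val = (g i).val := by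
  have heq : ∀ i j, f i = f j → g i = g j := fun i j hij =>
    le_antisymm ((hfg i j).mp (le_of_eq hij)) ((hfg j i).mp (le_of_eq hij.symm))
  have heq' : ∀ i j, g i = g j → f i = f j := fun i j hij =>
    le_antisymm ((hfg i j).mpr (le_of_eq hij)) ((hfg j i).mpr (le_of_eq hij.symm))
  obtain ⟨sec, hsec⟩ := hf.hasRightInverse
  obtain ⟨sec', hsec'⟩ := hg.hasRightInverse
  set φ : Fin k → Fin l := fun x => g (sec x) with hφ
  set ψ : Fin l → Fin k := fun y => f (sec' y) with hψ
  have hφf : ∀ i, φ (f i) = g i := fun i => heq _ _ (hsec (f i))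
  have hψg : ∀ i, ψ (g i) = f i := fun i => heq' _ _ (hsec' (g i))
  have h1 : ∀ x, ψ (φ x) = x := fun x => by
    calc ψ (φ x) = ψ (φ (f (sec x))) := by rw [hsec x]
    _ = ψ (g (sec x)) := by rw [hφf]
    _ = f (sec x) := hψg _
    _ = x := hsec x
  have h2 : ∀ y, φ (ψ y) = y := fun y => by
    calc φ (ψ y) = φ (ψ (g (sec' y))) := by rw [hsec' y]
    _ = φ (f (sec' y)) := by rw [hψg]
    _ = g (sec' y) := hφf _
    _ = y := hsec' y
  have hφmono : Monotone φ := by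
    intro x y hxy
    obtain ⟨i, rfl⟩ := hf x
    obtain ⟨j, rfl⟩ := hf y
    rw [hφf, hφf]
    exact (hfg i j).mp hxy
  have hφbij : Function.Bijective φ :=
    ⟨Function.LeftInverse.injective h1, fun y => ⟨ψ y, h2 y⟩⟩
  have hkl : k = l := Fin.equiv_iff_eq.mp ⟨Equiv.ofBijective φ hφbij⟩
  subst hkl
  refine ⟨rfl, fun i => ?_⟩
  have hsm : StrictMono φ := hφmono.strictMono_of_injective hφbij.1
  have hid := Fin.coe_orderIso_apply (StrictMono.orderIsoOfSurjective φ hsm hφbij.2) (f i)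
  rw [show ((StrictMono.orderIsoOfSurjective φ hsm hφbij.2) (f i)) = φ (f i) from rfl,
    hφf] at hid
  exact hid.symm

theorem tree_ext {T T' : LabeledPrunedTree h n} (hk : T.k = T'.k)
    (hρ : ∀ (m : Fin h) (x : Fin (T.k m.succ)) (x' : Fin (T'.k m.succ)),
        x.val = x'.val → (T.ρ m x).val = (T'.ρ m x').val)
    (hl : ∀ (x : Fin (T.k (Fin.last h))) (x' : Fin (T'.k (Fin.last h))),
        x.val = x'.val → T.label x = T'.label x') :
    T = T' := by
  obtain ⟨k, kz, kp, ρ, mo, pr, lab⟩ := T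
  obtain ⟨k', kz', kp', ρ', mo', pr', lab'⟩ := T'
  dsimp only at hk hρ hl
  subst hk
  have hρ' : ρ = ρ' := by
    funext m x
    exact Fin.ext (hρ m x x rfl)
  have hl' : lab = lab' := by
    apply Equiv.ext
    intro x
    exact hl x x rfl
  subst hρ'
  subst hl'
  rfl

theorem treeF_rho (T : LabeledPrunedTree h n) (t : ℕ) (ht : t + 1 < h) (i : Fin n) :
    (treeF T ⟨t, Nat.lt_of_succ_lt ht⟩ i).val
      = (T.ρ ⟨t+1, ht⟩ (treeF T ⟨t+1, ht⟩ i)).val := by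
  rw [treeF_step T ⟨t, Nat.lt_of_succ_lt ht⟩ ⟨t+1, ht⟩ (Nat.le_succ t) i]
  rw [down_peel T (t+1) ht (t+1) (Nat.le_succ (t+1)) le_rfl]
  rw [down_val_self T _ _ _ _ rfl]

theorem toFlag_inj :
    Function.Injective (toFlag : LabeledPrunedTree (h+1) n → FlagOfPreorders (h+1) n) := by
  intro T T' hTT'
  have hle : ∀ (s : Fin (h+1)) (i j : Fin n),
      (treeF T s i ≤ treeF T s j) ↔ (treeF T' s i ≤ treeF T' s j) := fun s i j =>
    iff_of_eq (congrFun (congrFun (congrFun (congrArg FlagOfPreorders.le hTT') s) i) j)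
  have key : ∀ s : Fin (h+1),
      T.k s.succ = T'.k s.succ ∧ ∀ i, (treeF T s i).val = (treeF T' s i).val :=
    fun s => rank_unique (treeF_surj T s) (treeF_surj T' s) (hle s)
  have hk : T.k = T'.k := by
    funext m
    refine Fin.cases ?_ (fun s => (key s).1) m
    rw [T.k_zero, T'.k_zero]
  apply tree_ext hk
  · intro m x x' hxx'
    match m with
    | ⟨0, h0⟩ =>
      have e0 : ((⟨0, h0⟩ : Fin (h+1)).castSucc) = (0 : Fin (h+2)) := Fin.ext (by simp)
      have h1 : (T.ρ ⟨0, h0⟩ x).val < 1 :=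
        lt_of_lt_of_eq (T.ρ ⟨0, h0⟩ x).isLt (by rw [e0, T.k_zero])
      have h2 : (T'.ρ ⟨0, h0⟩ x').val < 1 :=
        lt_of_lt_of_eq (T'.ρ ⟨0, h0⟩ x').isLt (by rw [e0, T'.k_zero])
      omega
    | ⟨t+1, ht⟩ =>
      obtain ⟨i, hi⟩ := treeF_surj T ⟨t+1, ht⟩ x
      have hx' : treeF T' ⟨t+1, ht⟩ i = x' := by
        apply Fin.ext
        rw [← (key ⟨t+1, ht⟩).2 i, hi, hxx']
      rw [← hi, ← hx']
      rw [← treeF_rho T t ht i, ← treeF_rho T' t ht i]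
      exact (key ⟨t, Nat.lt_of_succ_lt ht⟩).2 i
  · intro x x' hxx'
    have h1 : T.label.symm (T.label x) = x := T.label.symm_apply_apply x
    have hv : (T.label.symm (T.label x)).val = (T'.label.symm (T.label x)).val := by
      rw [← treeF_top_val T (Fin.last h) rfl (T.label x),
        ← treeF_top_val T' (Fin.last h) rfl (T.label x)]
      exact (key (Fin.last h)).2 (T.label x)
    have h2 : T'.label.symm (T.label x) = x' := by
      apply Fin.ext
      rw [← hv, h1, hxx']
    rw [← h2, T'.label.apply_symm_apply]

end Aux

/-- For every `h ≥ 1` and `n ≥ 1` there is a natural bijection between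
labeled pruned `h`-trees with `n` tips and flags of pre-orders `(π_1 ≺ ⋯ ≺ π_h)` on
`{1,…,n}` with `π_h` a total order; under this bijection a tree `T` of dimension `i`
corresponds to a flag with `Σ_{s=1}^h |π_s| − h − 1 = i`, i.e. the number of edges of `T`
equals `Σ_{s=1}^h |π_s|`. -/
theorem statement10 (h n : ℕ) (hh : 1 ≤ h) (hn : 1 ≤ n) :
    ∃ e : LabeledPrunedTree h n ≃ FlagOfPreorders h n,
      ∀ T : LabeledPrunedTree h n, T.edges = ∑ s : Fin h, (e T).numClasses s := by
  obtain ⟨h', rfl⟩ : ∃ h', h = h' + 1 := ⟨h - 1, by omega⟩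
  refine ⟨Equiv.ofBijective Aux.toFlag
    ⟨Aux.toFlag_inj, fun F => ⟨Aux.fromFlag hn F, Aux.toFlag_fromFlag hn F⟩⟩, fun T => ?_⟩
  show ∑ m : Fin (h'+1), T.k m.succ = ∑ s : Fin (h'+1), (Aux.toFlag T).numClasses s
  exact Finset.sum_congr rfl fun s _ => (Aux.numClasses_toFlag T s).symm
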